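/- The true delayed gain perturbation satisfies the weight bound: for all ω with 0 ≤ ω < π/δt_d, and for all k ∈ [K, K+δK] and τ ∈ [0, δt_d], |(k/K)e^{−jτω} − 1| ≤ |((K+δK)/K)e^{−jδt_dω} − 1|, provided K, δK > 0. -/

import Mathlib

open Real Complex

lemma aux_abs_form (r θ : ℝ) :
    ‖(r:ℂ) * Complex.exp (-Complex.I * θ) - 1‖
      = Real.sqrt (r^2 - 2*r*Real.cos θ + 1) := by
  have h : -Complex.I * (θ:ℂ) = ((-θ : ℝ) : ℂ) * Complex.I := by push_cast; ring
  rw [Complex.norm_def, h, Complex.exp_mul_I]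
  congr 1
  simp [Complex.normSq_apply, Complex.cos_ofReal_re, Complex.sin_ofReal_re]
  nlinarith [Real.sin_sq_add_cos_sq θ]

theorem laughlin_weight_covers (K δK δtd : ℝ) (hK : 0 < K) (hδK : 0 < δK) :
    ∀ ω : ℝ, 0 ≤ ω → ω < π / δtd →
      ∀ k ∈ Set.Icc K (K + δK), ∀ τ ∈ Set.Icc (0 : ℝ) δtd,
        ‖(k / K : ℂ) * Complex.exp (-Complex.I * τ * ω) - 1‖
          ≤ ‖((K + δK) / K : ℂ) * Complex.exp (-Complex.I * δtd * ω) - 1‖ := by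
  intro ω hω hωlt k hk τ hτ
  obtain ⟨hτ0, hτd⟩ := hτ
  obtain ⟨hk1, hk2⟩ := hk
  have hd : 0 < δtd := by
    rcases lt_or_eq_of_le (le_trans hτ0 hτd) with h | h
    · exact h
    · exfalso; rw [← h] at hωlt; simp at hωlt; linarith
  have hdw : δtd * ω < π := by
    rcases eq_or_lt_of_le hω with h | h
    · rw [← h]; simpa using Real.pi_pos
    · calc δtd * ω = ω * δtd := mul_comm _ _
        _ < π := (lt_div_iff₀ hd).mp hωlt
  have h1 : (k / K : ℂ) * Complex.exp (-Complex.I * τ * ω) - 1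
      = ((k/K : ℝ) : ℂ) * Complex.exp (-Complex.I * ((τ*ω : ℝ):ℂ)) - 1 := by
    push_cast; ring_nf
  have h2 : ((K + δK) / K : ℂ) * Complex.exp (-Complex.I * δtd * ω) - 1
      = (((K+δK)/K : ℝ) : ℂ) * Complex.exp (-Complex.I * ((δtd*ω : ℝ):ℂ)) - 1 := by
    push_cast; ring_nf
  rw [h1, h2, aux_abs_form, aux_abs_form]
  apply Real.sqrt_le_sqrt
  have hr1 : 1 ≤ k / K := (one_le_div hK).mpr hk1
  have hrR : k / K ≤ (K + δK) / K := (div_le_div_iff_of_pos_right hK).mpr hk2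
  have hcos : Real.cos (δtd * ω) ≤ Real.cos (τ * ω) :=
    Real.cos_le_cos_of_nonneg_of_le_pi (mul_nonneg hτ0 hω) (le_of_lt hdw)
      (mul_le_mul_of_nonneg_right hτd hω)
  have hcos1 : Real.cos (τ * ω) ≤ 1 := Real.cos_le_one _
  nlinarith [hr1, hrR, hcos, hcos1]
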